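/- For every positive integer n and every integer k with 0 ≤ k ≤ n-1, the Eulerian number is given by the explicit formula A_{n,k} = ∑_{i=0}^{k} (-1)^i (k-i+1)^n C(n+1, i), where C denotes the binomial coefficient. -/

import Mathlib

open scoped Classical

/-- Number of ascents of a permutation of `Fin n`:
positions `j` with `j + 1 < n` and `π j < π (j+1)`. -/
noncomputable def ascentCount {n : ℕ} (π : Equiv.Perm (Fin n)) : ℕ :=
  ((Finset.range (n - 1)).filter (fun j =>
    ∃ h : j + 1 < n, π ⟨j, Nat.lt_of_succ_lt h⟩ < π ⟨j + 1, h⟩)).card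

/-- The Eulerian number `A_{n,k}`: the number of permutations of an `n`-element
linearly ordered set with exactly `k` ascents. -/
noncomputable def eulerian (n k : ℕ) : ℕ :=
  (Finset.univ.filter (fun π : Equiv.Perm (Fin n) => ascentCount π = k)).card

/-- The `n`-th Eulerian polynomial `A_n(t) = ∑_{k=0}^{n-1} A_{n,k} t^k`, with `A_0(t) = 1`. -/
noncomputable def eulerianPoly (n : ℕ) (t : ℝ) : ℝ :=
  if n = 0 then 1 else ∑ k ∈ Finset.range n, (eulerian n k : ℝ) * t ^ k



/-- gap lemma -/
lemma strictMono_val_add_le {N m : ℕ} {h : Fin N → Fin m} (hm : StrictMono h)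
    {i j : Fin N} (hij : i ≤ j) : (h i : ℕ) + ((j : ℕ) - (i : ℕ)) ≤ (h j : ℕ) := by
  obtain ⟨d, hd⟩ := Nat.le.dest (show (i : ℕ) ≤ (j : ℕ) from hij)
  induction d generalizing j with
  | zero =>
    have : i = j := Fin.ext (by omega)
    subst this; omega
  | succ d ih =>
    have hjn : (i : ℕ) + d < N := by omega
    have h1 := ih (j := ⟨(i : ℕ) + d, hjn⟩) (by simp [Fin.le_def]) rfl
    have h2 : h ⟨(i : ℕ) + d, hjn⟩ < h j := hm (by simp [Fin.lt_def]; omega)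
    rw [Fin.lt_def] at h2
    simp at h1
    omega

lemma card_strictMono_filter (a b : ℕ) :
    ((Finset.univ : Finset (Fin a → Fin b)).filter (fun h => StrictMono h)).card = b.choose a := by
  classical
  have e : {f : Fin a → Fin b // StrictMono f} ≃ {s : Finset (Fin b) // s.card = a} :=
    { toFun := fun f => ⟨Finset.univ.image f.1, by
        rw [Finset.card_image_of_injective _ f.2.injective, Finset.card_univ, Fintype.card_fin]⟩
      invFun := fun s => ⟨⇑(s.1.orderEmbOfFin s.2), (s.1.orderEmbOfFin s.2).strictMono⟩
      left_inv := fun f => by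
        apply Subtype.ext
        exact (Finset.orderEmbOfFin_unique _ (fun x => Finset.mem_image_of_mem _ (Finset.mem_univ x)) f.2).symm
      right_inv := fun s => by
        apply Subtype.ext
        rw [← Finset.coe_inj, Finset.coe_image, Finset.coe_univ, Set.image_univ,
          Finset.range_orderEmbOfFin] }
  have := Fintype.card_congr e
  rw [Fintype.card_finset_len, Fintype.card_fin] at this
  rw [← this, Fintype.card_subtype]

lemma coeff_one_sub_pow (m i : ℕ) :
    PowerSeries.coeff (R := ℤ) i ((1 - PowerSeries.X) ^ m) = (-1) ^ i * m.choose i := by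
  rw [sub_eq_add_neg, add_comm (1 : PowerSeries ℤ) (-PowerSeries.X), add_pow]
  rw [map_sum]
  have : ∀ q ∈ Finset.range (m + 1),
      PowerSeries.coeff (R := ℤ) i ((-PowerSeries.X) ^ q * (1 : PowerSeries ℤ) ^ (m - q) * (m.choose q : PowerSeries ℤ))
        = if q = i then (-1) ^ i * (m.choose i : ℤ) else 0 := by
    intro q _
    rw [one_pow, mul_one, neg_pow, mul_comm, ← mul_assoc]
    rw [show ((m.choose q : PowerSeries ℤ) * (-1) ^ q) = PowerSeries.C (R := ℤ) ((m.choose q : ℤ) * (-1) ^ q) by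
      push_cast; ring_nf; simp [map_mul, map_pow, map_natCast]]
    rw [PowerSeries.coeff_C_mul, PowerSeries.coeff_X_pow]
    by_cases h : q = i
    · simp [h, mul_comm]
    · simp only [if_neg h, if_neg (Ne.symm h), mul_zero]
  rw [Finset.sum_congr rfl this, Finset.sum_ite_eq' (Finset.range (m + 1))]
  by_cases h : i ∈ Finset.range (m + 1)
  · simp [h]
  · simp only [h, if_false]
    rw [Finset.mem_range, not_lt] at h
    rw [Nat.choose_eq_zero_of_lt (by omega)]
    simp


lemma gfi (n t : ℕ) :
    ∑ i ∈ Finset.range (t + 1), (-1 : ℤ) ^ i * ((n + 1).choose i) * ((n + (t - i)).choose n)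
      = if t = 0 then 1 else 0 := by
  have E := PowerSeries.mk_add_choose_mul_one_sub_pow_eq_one (S := ℤ) (d := n)
  have E2 : ((1 - PowerSeries.X) ^ (n + 1) : PowerSeries ℤ)
      * (PowerSeries.mk fun m => ((n + m).choose n : ℤ)) = 1 := by
    rw [mul_comm]; exact E
  have := congrArg (PowerSeries.coeff (R := ℤ) t) E2
  rw [PowerSeries.coeff_mul, Finset.Nat.sum_antidiagonal_eq_sum_range_succ_mk,
    PowerSeries.coeff_one] at this
  rw [← this]
  refine Finset.sum_congr rfl fun i hi => ?_
  rw [coeff_one_sub_pow, PowerSeries.coeff_mk]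

def ascAt {n : ℕ} (w : Equiv.Perm (Fin n)) (j : ℕ) : Prop :=
  ∃ h : j + 1 < n, w ⟨j, Nat.lt_of_succ_lt h⟩ < w ⟨j + 1, h⟩

noncomputable def ACnt {n : ℕ} (w : Equiv.Perm (Fin n)) (j : ℕ) : ℕ :=
  ((Finset.range j).filter (ascAt w)).card

variable {n x : ℕ} (w : Equiv.Perm (Fin n))

lemma ascentCount_eq : ascentCount w = ACnt w (n - 1) :=
  congrArg Finset.card (Finset.filter_congr fun x _ => Iff.rfl)

lemma ACnt_mono {i j : ℕ} (h : i ≤ j) : ACnt w i ≤ ACnt w j :=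
  Finset.card_le_card (Finset.monotone_filter_left _ (by simpa using Finset.range_subset_range.2 h))

lemma ACnt_le_self (j : ℕ) : ACnt w j ≤ j :=
  le_trans (Finset.card_filter_le _ _) (by simp)

lemma ACnt_succ (j : ℕ) : ACnt w (j + 1) = ACnt w j + if ascAt w j then 1 else 0 := by
  rw [ACnt, Finset.range_add_one, Finset.filter_insert]
  split_ifs with h
  · rw [Finset.card_insert_of_notMem (by simp), ACnt]
  · rw [ACnt, add_zero]

lemma ACnt_le_asc (j : ℕ) : ACnt w j ≤ ascentCount w := by
  rw [ascentCount_eq, ACnt, ACnt]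
  apply Finset.card_le_card
  intro i hi
  rw [Finset.mem_filter] at hi ⊢
  obtain ⟨-, hP⟩ := hi
  exact ⟨Finset.mem_range.2 (by obtain ⟨h, -⟩ := hP; omega), hP⟩

lemma asc_le_ACnt_add (j : ℕ) : ascentCount w ≤ ACnt w j + ((n - 1) - j) := by
  rw [ascentCount_eq, ACnt, ACnt]
  calc ((Finset.range (n - 1)).filter (ascAt w)).card
      ≤ (((Finset.range j).filter (ascAt w)) ∪ Finset.Ico j (n - 1)).card := by
        apply Finset.card_le_card
        intro i hi
        rw [Finset.mem_filter, Finset.mem_range] at hi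
        rw [Finset.mem_union, Finset.mem_filter, Finset.mem_range, Finset.mem_Ico]
        by_cases hij : i < j
        · exact Or.inl ⟨hij, hi.2⟩
        · exact Or.inr ⟨by omega, hi.1⟩
    _ ≤ _ := le_trans (Finset.card_union_le _ _) (by rw [Nat.card_Ico])

lemma sort_eq_iff (hn : 0 < n) {f : Fin n → Fin x} :
    w = Tuple.sort f ↔ ∀ j (hj : j + 1 < n),
      f (w ⟨j, Nat.lt_of_succ_lt hj⟩) < f (w ⟨j + 1, hj⟩) ∨
      (f (w ⟨j, Nat.lt_of_succ_lt hj⟩) = f (w ⟨j + 1, hj⟩) ∧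
        w ⟨j, Nat.lt_of_succ_lt hj⟩ < w ⟨j + 1, hj⟩) := by
  cases n with
  | zero => omega
  | succ m =>
    rw [Tuple.eq_sort_iff', Fin.strictMono_iff_lt_succ]
    constructor
    · intro H j hj
      have := H ⟨j, by omega⟩
      simp only [Equiv.trans_apply, Tuple.graphEquiv₁, Equiv.coe_fn_mk,
        Subtype.mk_lt_mk] at this
      exact Prod.Lex.lt_iff.mp this
    · intro H i
      have := H i.1 (by omega)
      simp only [Equiv.trans_apply, Tuple.graphEquiv₁, Equiv.coe_fn_mk,
        Subtype.mk_lt_mk]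
      exact Prod.Lex.lt_iff.mpr this

lemma fiber_card (hn : 0 < n) :
    ((Finset.univ : Finset (Fin n → Fin x)).filter (fun f => Tuple.sort f = w)).card
      = ((Finset.univ : Finset (Fin n → Fin (x + ascentCount w))).filter
          (fun h => StrictMono h)).card := by
  obtain ⟨m, rfl⟩ : ∃ m, n = m + 1 := ⟨n - 1, by omega⟩
  refine Finset.card_bij
    (fun f _ => fun j => (⟨(f (w j) : ℕ) + ACnt w (j : ℕ),
      Nat.add_lt_add_of_lt_of_le (f (w j)).isLt (ACnt_le_asc w _)⟩ : Fin (x + ascentCount w)))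
    ?_ ?_ ?_
  · intro f hf
    simp only [Finset.mem_filter, Finset.mem_univ, true_and] at hf ⊢
    rw [Fin.strictMono_iff_lt_succ]
    intro i
    have hchar := (sort_eq_iff w (by omega)).mp hf.symm i.1 (show i.1 + 1 < m + 1 by omega)
    rw [Fin.lt_def]
    show (f (w ⟨i.1, by omega⟩) : ℕ) + ACnt w ((⟨i.1, by omega⟩ : Fin (m + 1)) : ℕ)
      < (f (w ⟨i.1 + 1, by omega⟩) : ℕ) + ACnt w ((⟨i.1 + 1, by omega⟩ : Fin (m + 1)) : ℕ)
    simp only [Fin.val_mk]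
    have hmono := ACnt_mono w (show i.1 ≤ i.1 + 1 by omega)
    rcases hchar with hlt | ⟨heq, hwlt⟩
    · have h5 : (f (w ⟨i.1, by omega⟩) : ℕ) < (f (w ⟨i.1 + 1, by omega⟩) : ℕ) :=
        Fin.lt_def.mp hlt
      omega
    · have hP : ascAt w i.1 := ⟨by omega, hwlt⟩
      have hA := ACnt_succ w i.1
      rw [if_pos hP] at hA
      have heqv : (f (w ⟨i.1, by omega⟩) : ℕ) = (f (w ⟨i.1 + 1, by omega⟩) : ℕ) :=
        congrArg Fin.val heq
      omega
  · intro f hf f' hf' heq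
    funext i
    have h1 := congrFun heq (w.symm i)
    simp only [Equiv.apply_symm_apply] at h1
    have h2 : (f i : ℕ) + ACnt w ((w.symm i : Fin (m + 1)) : ℕ)
        = (f' i : ℕ) + ACnt w ((w.symm i : Fin (m + 1)) : ℕ) := congrArg Fin.val h1
    exact Fin.ext (by omega)
  · intro h hh
    simp only [Finset.mem_filter, Finset.mem_univ, true_and] at hh
    have hub : ∀ j : Fin (m + 1), (h j : ℕ) + (m - j.1) < x + ascentCount w := by
      intro j
      have h1 : (h j : ℕ) + (m - j.1) ≤ (h (⟨m, by omega⟩ : Fin (m + 1)) : ℕ) :=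
        strictMono_val_add_le hh (i := j) (j := ⟨m, by omega⟩)
          (by rw [Fin.le_def]; exact Nat.lt_succ_iff.mp j.isLt)
      have h2 : (h (⟨m, by omega⟩ : Fin (m + 1)) : ℕ) < x + ascentCount w :=
        (h (⟨m, by omega⟩ : Fin (m + 1))).isLt
      omega
    have hlb : ∀ j : Fin (m + 1), ACnt w j.1 ≤ (h j : ℕ) := by
      intro j
      have h1 : (h (⟨0, by omega⟩ : Fin (m + 1)) : ℕ) + j.1 ≤ (h j : ℕ) :=
        strictMono_val_add_le hh (i := (⟨0, by omega⟩ : Fin (m + 1))) (j := j)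
          (by rw [Fin.le_def]; exact Nat.zero_le _)
      have h2 := ACnt_le_self w j.1
      omega
    have hasc : ∀ j : Fin (m + 1), ascentCount w ≤ ACnt w j.1 + (m - j.1) := by
      intro j
      have h1 := asc_le_ACnt_add w j.1
      simpa using h1
    have hbound : ∀ i : Fin (m + 1),
        (h (w.symm i) : ℕ) - ACnt w ((w.symm i : Fin (m + 1)) : ℕ) < x := by
      intro i
      have h1 := hub (w.symm i)
      have h2 := hlb (w.symm i)
      have h3 := hasc (w.symm i)
      have h4 := ACnt_le_asc w ((w.symm i : Fin (m + 1)) : ℕ)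
      omega
    refine ⟨fun i => ⟨(h (w.symm i) : ℕ) - ACnt w ((w.symm i : Fin (m + 1)) : ℕ), hbound i⟩,
      ?_, ?_⟩
    · simp only [Finset.mem_filter, Finset.mem_univ, true_and]
      refine ((sort_eq_iff w (by omega)).mpr ?_).symm
      intro j hj
      have hjm : j < m + 1 := by omega
      have hs1 : w.symm (w ⟨j, hjm⟩) = ⟨j, hjm⟩ := Equiv.symm_apply_apply _ _
      have hs2 : w.symm (w ⟨j + 1, hj⟩) = ⟨j + 1, hj⟩ := Equiv.symm_apply_apply _ _
      have hstep : (h ⟨j, hjm⟩ : ℕ) < (h ⟨j + 1, hj⟩ : ℕ) :=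
        Fin.lt_def.mp (hh (show (⟨j, hjm⟩ : Fin (m + 1)) < ⟨j + 1, hj⟩ by
          rw [Fin.lt_def]; simp only [Fin.val_mk]; omega))
      have hlbj : ACnt w j ≤ (h ⟨j, hjm⟩ : ℕ) := hlb ⟨j, hjm⟩
      have hA := ACnt_succ w j
      by_cases hP : ascAt w j
      · rw [if_pos hP] at hA
        obtain ⟨hj', hwlt⟩ := hP
        by_cases hc : (h ⟨j, hjm⟩ : ℕ) - ACnt w j < (h ⟨j + 1, hj⟩ : ℕ) - ACnt w (j + 1)
        · left
          rw [Fin.lt_def]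
          simp only [hs1, hs2, Fin.val_mk]
          exact hc
        · right
          refine ⟨Fin.ext ?_, hwlt⟩
          simp only [hs1, hs2, Fin.val_mk]
          omega
      · rw [if_neg hP] at hA
        left
        rw [Fin.lt_def]
        simp only [hs1, hs2, Fin.val_mk]
        omega
    · funext j
      apply Fin.ext
      show ((h (w.symm (w j)) : ℕ) - ACnt w ((w.symm (w j) : Fin (m + 1)) : ℕ))
          + ACnt w (j : ℕ) = (h j : ℕ)
      rw [Equiv.symm_apply_apply]
      have h2 := hlb j
      omega

lemma ascentCount_le (w : Equiv.Perm (Fin n)) : ascentCount w ≤ n - 1 :=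
  le_trans (Finset.card_filter_le _ _) (by simp)

lemma worpitzky (n : ℕ) (hn : 0 < n) (x : ℕ) :
    x ^ n = ∑ k ∈ Finset.range n, eulerian n k * (x + k).choose n := by
  have h0 : ((Finset.univ : Finset (Fin n → Fin x))).card = x ^ n := by
    simp [Finset.card_univ]
  rw [← h0, Finset.card_eq_sum_card_fiberwise
    (f := fun f => Tuple.sort f) (t := Finset.univ) (fun f _ => Finset.mem_univ _)]
  rw [Finset.sum_congr rfl fun w (_ : w ∈ Finset.univ) =>
    (fiber_card w hn).trans (card_strictMono_filter _ _)]
  rw [← Finset.sum_fiberwise_of_maps_to (g := fun w : Equiv.Perm (Fin n) => ascentCount w)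
    (t := Finset.range n)
    (fun w _ => Finset.mem_range.2 (lt_of_le_of_lt (ascentCount_le w) (by omega)))]
  refine Finset.sum_congr rfl fun k hk => ?_
  rw [eulerian]
  rw [Finset.sum_congr rfl (fun w hw => by
    rw [Finset.mem_filter] at hw
    rw [hw.2] : ∀ w ∈ Finset.univ.filter (fun w : Equiv.Perm (Fin n) => ascentCount w = k),
      (x + ascentCount w).choose n = (x + k).choose n)]
  rw [Finset.sum_const, smul_eq_mul]

lemma ascentCount_revPerm (w : Equiv.Perm (Fin n)) :
    ascentCount (w.trans Fin.revPerm) = (n - 1) - ascentCount w := by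
  have hsub : (Finset.range (n - 1)).filter (ascAt w) ⊆ Finset.range (n - 1) :=
    Finset.filter_subset _ _
  have hset : (Finset.range (n - 1)).filter (ascAt (w.trans Fin.revPerm))
      = Finset.range (n - 1) \ (Finset.range (n - 1)).filter (ascAt w) := by
    ext i
    simp only [Finset.mem_filter, Finset.mem_sdiff, Finset.mem_range]
    constructor
    · rintro ⟨hi, hP⟩
      refine ⟨hi, fun hc => ?_⟩
      obtain ⟨h, hlt⟩ := hP
      obtain ⟨-, h', hlt'⟩ := hc
      simp only [Equiv.trans_apply, Fin.revPerm_apply, Fin.rev_lt_rev] at hlt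
      exact absurd hlt' (not_lt.2 hlt.le)
    · rintro ⟨hi, hc⟩
      have h : i + 1 < n := by omega
      refine ⟨hi, h, ?_⟩
      simp only [Equiv.trans_apply, Fin.revPerm_apply, Fin.rev_lt_rev]
      have hne : w ⟨i + 1, h⟩ ≠ w ⟨i, Nat.lt_of_succ_lt h⟩ := by
        intro he
        have := w.injective he
        simp [Fin.ext_iff] at this
      rcases lt_or_gt_of_ne hne with h1 | h1
      · exact h1
      · exact absurd ⟨hi, h, h1⟩ hc
  have e1 : ascentCount (w.trans Fin.revPerm) = ((Finset.range (n - 1)).filter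
      (ascAt (w.trans Fin.revPerm))).card := ascentCount_eq _
  have e2 : ascentCount w = ((Finset.range (n - 1)).filter (ascAt w)).card :=
    ascentCount_eq _
  rw [e1, e2, hset, Finset.card_sdiff_of_subset hsub, Finset.card_range]

lemma eulerian_symm (n k : ℕ) (hk : k ≤ n - 1) :
    eulerian n k = eulerian n (n - 1 - k) := by
  rw [eulerian, eulerian]
  refine Finset.card_bij (fun w _ => w.trans Fin.revPerm) ?_ ?_ ?_
  · intro w hw
    rw [Finset.mem_filter] at hw ⊢
    exact ⟨Finset.mem_univ _, by rw [ascentCount_revPerm, hw.2]⟩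
  · intro w _ w' _ he
    have : ∀ i, w i = w' i := by
      intro i
      have := congrArg (fun u : Equiv.Perm (Fin n) => Fin.rev (u i)) he
      simpa [Equiv.trans_apply, Fin.rev_rev] using this
    exact Equiv.ext this
  · intro u hu
    rw [Finset.mem_filter] at hu
    refine ⟨u.trans Fin.revPerm, Finset.mem_filter.2 ⟨Finset.mem_univ _, ?_⟩, ?_⟩
    · rw [ascentCount_revPerm, hu.2]
      have := ascentCount_le u
      omega
    · apply Equiv.ext
      intro i
      simp [Equiv.trans_apply, Fin.rev_rev]

lemma inner_claim (n k : ℕ) (hn : 1 ≤ n) (hk : k ≤ n - 1) {j : ℕ} (hj : j < n) :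
    (∑ i ∈ Finset.range (k + 1),
      (-1 : ℤ) ^ i * ((n + 1).choose i) * ((k + 1 - i + j).choose n))
    = if j = n - 1 - k then 1 else 0 := by
  by_cases hc : j + k + 1 < n
  · have hz : ∀ i ∈ Finset.range (k + 1),
        (-1 : ℤ) ^ i * ((n + 1).choose i) * ((k + 1 - i + j).choose n) = 0 := by
      intro i hi
      rw [Finset.mem_range] at hi
      rw [Nat.choose_eq_zero_of_lt (show k + 1 - i + j < n by omega), Nat.cast_zero, mul_zero]
    rw [Finset.sum_congr rfl hz, Finset.sum_const_zero, if_neg (by omega)]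
  · obtain ⟨t, ht⟩ : ∃ t, j + k + 1 = n + t := ⟨j + k + 1 - n, by omega⟩
    have htk : t ≤ k := by omega
    have hsum : (∑ i ∈ Finset.range (k + 1),
        (-1 : ℤ) ^ i * ((n + 1).choose i) * ((k + 1 - i + j).choose n))
        = ∑ i ∈ Finset.range (t + 1),
          (-1 : ℤ) ^ i * ((n + 1).choose i) * ((k + 1 - i + j).choose n) := by
      symm
      apply Finset.sum_subset (Finset.range_subset_range.2 (by omega))
      intro i hi hni
      simp only [Finset.mem_range] at hi hni
      rw [Nat.choose_eq_zero_of_lt (show k + 1 - i + j < n by omega), Nat.cast_zero, mul_zero]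
    have hre : ∀ i ∈ Finset.range (t + 1),
        (-1 : ℤ) ^ i * ((n + 1).choose i) * ((k + 1 - i + j).choose n)
          = (-1 : ℤ) ^ i * ((n + 1).choose i) * ((n + (t - i)).choose n) := by
      intro i hi
      rw [Finset.mem_range] at hi
      rw [show k + 1 - i + j = n + (t - i) from by omega]
    have hiff : (t = 0) = (j = n - 1 - k) := by
      apply propext
      constructor <;> intro <;> omega
    rw [hsum, Finset.sum_congr rfl hre, gfi n t]
    simp only [hiff]


/-- Explicit formula for the Eulerian numbers:
`A_{n,k} = ∑_{i=0}^k (-1)^i (k-i+1)^n C(n+1, i)` for `0 ≤ k ≤ n-1`. -/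
theorem eulerian_explicit (n k : ℕ) (hn : 1 ≤ n) (hk : k ≤ n - 1) :
    (eulerian n k : ℤ) =
      ∑ i ∈ Finset.range (k + 1),
        (-1 : ℤ) ^ i * ((k : ℤ) - i + 1) ^ n * ((n + 1).choose i) := by
  have hterm : ∀ i ∈ Finset.range (k + 1),
      (-1 : ℤ) ^ i * ((k : ℤ) - i + 1) ^ n * ((n + 1).choose i)
        = ∑ j ∈ Finset.range n, (eulerian n j : ℤ) *
            ((-1 : ℤ) ^ i * ((n + 1).choose i) * ((k + 1 - i + j).choose n)) := by
    intro i hi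
    rw [Finset.mem_range] at hi
    have hcast : ((k : ℤ) - i + 1) = ((k + 1 - i : ℕ) : ℤ) := by
      rw [Nat.cast_sub (by omega : i ≤ k + 1)]
      push_cast
      ring
    rw [hcast, show ((k + 1 - i : ℕ) : ℤ) ^ n = (((k + 1 - i) ^ n : ℕ) : ℤ) by push_cast; ring]
    rw [worpitzky n hn (k + 1 - i)]
    push_cast
    rw [Finset.mul_sum, Finset.sum_mul]
    exact Finset.sum_congr rfl fun j _ => by ring
  rw [Finset.sum_congr rfl hterm, Finset.sum_comm]
  have hinner : ∀ j ∈ Finset.range n,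
      (∑ i ∈ Finset.range (k + 1), (eulerian n j : ℤ) *
          ((-1 : ℤ) ^ i * ((n + 1).choose i) * ((k + 1 - i + j).choose n)))
        = if j = n - 1 - k then (eulerian n j : ℤ) else 0 := by
    intro j hj
    rw [Finset.mem_range] at hj
    rw [← Finset.mul_sum, inner_claim n k hn hk hj]
    split_ifs with h
    · rw [mul_one]
    · rw [mul_zero]
  rw [Finset.sum_congr rfl hinner, Finset.sum_ite_eq' (Finset.range n) (n - 1 - k)]
  rw [if_pos (Finset.mem_range.2 (by omega))]
  rw [eulerian_symm n k hk]
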